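/- Let φ be a probability density on [0,1) satisfying φ(a) ~ φ₁(1-a)^β as a→1⁻ with φ₁ > 0 and 0 < β < 1. Define f₄(x,y) = ∫₀¹ φ(a)/(1 - (a/2)(cos x + cos y))² da for (x,y) ∈ [-π,π]² \ {(0,0)}. Then there exists a constant C > 0 such that (x²+y²)^{1-β} f₄(x,y) → C as (x,y) → (0,0) with (x,y) ≠ (0,0). -/

import Mathlib

open MeasureTheory Filter Topology Set Real

lemma base_integrable {β : ℝ} (hβ0 : 0 < β) (hβ1 : β < 1) :
    IntegrableOn (fun u : ℝ => u ^ β / (1 + u) ^ 2) (Ioi 0) := by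
  have hmeas : Measurable (fun u : ℝ => u ^ β / (1 + u) ^ 2) := by
    exact (Real.continuous_rpow_const hβ0.le).measurable.div ((measurable_const.add measurable_id).pow_const 2)
  have h1 : IntegrableOn (fun u : ℝ => u ^ β / (1 + u) ^ 2) (Ioc 0 1) := by
    apply Integrable.mono' (g := fun _ => (1:ℝ)) (integrableOn_const (by simp) (by simp))
      hmeas.aestronglyMeasurable
    filter_upwards [ae_restrict_mem measurableSet_Ioc] with u hu
    have h0 : (0:ℝ) < u := hu.1
    have h2 : u ^ β ≤ 1 := by
      calc u ^ β ≤ 1 ^ β := Real.rpow_le_rpow h0.le hu.2 hβ0.le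
      _ = 1 := Real.one_rpow β
    have h3 : (1:ℝ) ≤ (1 + u) ^ 2 := by nlinarith
    rw [Real.norm_eq_abs, abs_of_nonneg (by positivity)]
    rw [div_le_one (by positivity)]
    linarith
  have h2 : IntegrableOn (fun u : ℝ => u ^ β / (1 + u) ^ 2) (Ioi 1) := by
    apply Integrable.mono' (g := fun u => u ^ (β - 2))
      (integrableOn_Ioi_rpow_of_lt (by linarith) one_pos) hmeas.aestronglyMeasurable
    filter_upwards [ae_restrict_mem measurableSet_Ioi] with u hu
    have h0 : (0:ℝ) < u := lt_trans one_pos hu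
    rw [Real.norm_eq_abs, abs_of_nonneg (by positivity)]
    have : u ^ (β - 2) = u ^ β / u ^ (2:ℝ) := by
      rw [Real.rpow_sub h0]
    rw [this, Real.rpow_two]
    apply div_le_div_of_nonneg_left (by positivity) (by positivity)
    nlinarith
  have : Ioi (0:ℝ) = Ioc 0 1 ∪ Ioi 1 := by
    rw [Set.Ioc_union_Ioi_eq_Ioi]; norm_num
  rw [this]
  exact h1.union h2

lemma B_pos {β : ℝ} (hβ0 : 0 < β) (hβ1 : β < 1) :
    0 < ∫ u in Ioi (0:ℝ), u ^ β / (1 + u) ^ 2 := by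
  have hint := base_integrable hβ0 hβ1
  have h1 : ∫ u in Ioc (1:ℝ) 2, (1/9 : ℝ) ≤ ∫ u in Ioc (1:ℝ) 2, u ^ β / (1 + u) ^ 2 := by
    apply setIntegral_mono_on (by simp) (hint.mono_set (by intro x hx; exact lt_trans one_pos hx.1))
      measurableSet_Ioc
    intro u hu
    have h0 : (1:ℝ) ≤ u := hu.1.le
    have h2 : (1:ℝ) ≤ u ^ β := Real.one_le_rpow h0 hβ0.le
    have h3 : (0:ℝ) < (1 + u) ^ 2 := by nlinarith
    have h4 : (1 + u) ^ 2 ≤ 9 := by nlinarith [hu.2]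
    rw [le_div_iff₀ h3]
    nlinarith
  have h2 : ∫ u in Ioc (1:ℝ) 2, u ^ β / (1 + u) ^ 2 ≤ ∫ u in Ioi (0:ℝ), u ^ β / (1 + u) ^ 2 := by
    apply setIntegral_mono_set hint
    · filter_upwards [ae_restrict_mem measurableSet_Ioi] with u hu
      have : (0:ℝ) < u := hu
      positivity
    · filter_upwards [] with u hu; exact lt_trans one_pos hu.1
  have h3 : ∫ u in Ioc (1:ℝ) 2, (1/9 : ℝ) = 1/9 := by
    simp [Real.volume_Ioc]
    norm_num
  linarith

set_option maxHeartbeats 1000000 in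
lemma key_limit {φ : ℝ → ℝ} {φ1 β : ℝ} (hφ1 : 0 < φ1) (hβ0 : 0 < β) (hβ1 : β < 1)
    (hmeas : Measurable φ)
    (hnonneg : ∀ a ∈ Set.Ico (0:ℝ) 1, 0 ≤ φ a)
    (hprob : ∫ a in Set.Ico (0:ℝ) 1, φ a = 1)
    (hasymp : Tendsto (fun a => φ a / (φ1 * (1 - a) ^ β)) (𝓝[<] (1:ℝ)) (𝓝 1)) :
    Tendsto (fun ε : ℝ => ε ^ ((1:ℝ) - β) * ∫ a in Set.Ico (0:ℝ) 1, φ a / ((1 - a) + a * ε) ^ 2)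
      (𝓝[>] (0:ℝ)) (𝓝 (φ1 * ∫ u in Ioi (0:ℝ), u ^ β / (1 + u) ^ 2)) := by
  -- φ is integrable on [0,1)
  have hφint : IntegrableOn φ (Ico (0:ℝ) 1) := by
    by_contra h
    rw [integral_undef h] at hprob
    exact one_ne_zero hprob.symm
  -- extract δ with the upper bound φ a ≤ 2 φ1 (1-a)^β on [1-δ, 1)
  obtain ⟨l, hl0, hsub⟩ := (mem_nhdsLT_iff_exists_Ioo_subset'
    (show (0:ℝ) < 1 by norm_num)).1 (hasymp.eventually_le_const (by norm_num : (1:ℝ) < 2))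
  set δ : ℝ := min ((1 - l)/2) (1/4) with hδdef
  have hl1 : l < 1 := hl0
  have hδ0 : 0 < δ := lt_min (by linarith) (by norm_num)
  have hδ4 : δ ≤ 1/4 := min_le_right _ _
  have hbound : ∀ a : ℝ, 1 - δ ≤ a → a < 1 → φ a ≤ 2 * φ1 * (1 - a) ^ β := by
    intro a ha1 ha2
    have hla : l < a := by
      have : δ ≤ (1 - l)/2 := min_le_left _ _
      linarith
    have hr : φ a / (φ1 * (1 - a) ^ β) ≤ 2 := hsub ⟨hla, ha2⟩
    have hpos : 0 < φ1 * (1 - a) ^ β := by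
      have : (0:ℝ) < 1 - a := by linarith
      positivity
    calc φ a = φ a / (φ1 * (1-a)^β) * (φ1 * (1-a)^β) := by rw [div_mul_cancel₀ _ hpos.ne']
    _ ≤ 2 * (φ1 * (1-a)^β) := by
        apply mul_le_mul_of_nonneg_right hr hpos.le
    _ = 2 * φ1 * (1-a)^β := by ring
  -- integrability of the full integrand for each ε > 0
  have hintf : ∀ ε : ℝ, 0 < ε → IntegrableOn (fun a => φ a / ((1 - a) + a * ε) ^ 2) (Ico (0:ℝ) 1) := by
    intro ε hε
    set m : ℝ := min ε 1 with hm
    have hm0 : 0 < m := lt_min hε one_pos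
    apply Integrable.mono' (g := fun a => m⁻¹ ^ 2 * φ a) (hφint.const_mul _)
    · exact (hmeas.div (((measurable_const.sub measurable_id).add
        (measurable_id.mul measurable_const)).pow_const 2)).aestronglyMeasurable
    · filter_upwards [ae_restrict_mem measurableSet_Ico] with a ha
      have ha0 : (0:ℝ) ≤ a := ha.1
      have ha1 : a < 1 := ha.2
      have hd : m ≤ (1 - a) + a * ε := by
        have h1 : m ≤ 1 := min_le_right _ _
        have h2 : m ≤ ε := min_le_left _ _
        nlinarith
      have hdpos : 0 < (1 - a) + a * ε := lt_of_lt_of_le hm0 hd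
      have hφa := hnonneg a ha
      rw [Real.norm_eq_abs, abs_of_nonneg (div_nonneg hφa (by positivity))]
      rw [div_le_iff₀ (by positivity)]
      calc φ a = φ a * 1 := (mul_one _).symm
      _ ≤ m⁻¹^2 * φ a * ((1-a)+a*ε)^2 := by
          rw [show m⁻¹^2 * φ a * ((1-a)+a*ε)^2 = φ a * (((1-a)+a*ε)^2 / m^2) by
            rw [inv_pow]; field_simp]
          apply mul_le_mul_of_nonneg_left _ hφa
          rw [le_div_iff₀ (by positivity)]
          nlinarith
  have hδ1 : δ < 1 := by linarith
  have h1δ0 : (0:ℝ) ≤ 1 - δ := by linarith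
  -- decomposition of the integral
  have hsplitev : ∀ ε : ℝ, 0 < ε →
      ε ^ ((1:ℝ)-β) * ∫ a in Ico (0:ℝ) 1, φ a / ((1-a)+a*ε)^2
      = (ε ^ ((1:ℝ)-β) * ∫ a in Ico (0:ℝ) (1-δ), φ a / ((1-a)+a*ε)^2)
        + ε ^ ((1:ℝ)-β) * ∫ a in Ico (1-δ) 1, φ a / ((1-a)+a*ε)^2 := by
    intro ε hε
    rw [← mul_add, ← setIntegral_union (Set.Ico_disjoint_Ico_same) measurableSet_Ico
      ((hintf ε hε).mono_set (Ico_subset_Ico_right (by linarith)))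
      ((hintf ε hε).mono_set (Ico_subset_Ico_left (by linarith))),
      Set.Ico_union_Ico_eq_Ico h1δ0 (by linarith)]
  -- ε^(1-β) → 0
  have hrpow0 : Tendsto (fun ε : ℝ => ε ^ ((1:ℝ)-β)) (𝓝[>] 0) (𝓝 0) := by
    have hc := (Real.continuousAt_rpow_const 0 (1-β) (Or.inr (by linarith))).tendsto
    rw [Real.zero_rpow (by intro h; linarith [h] : (1:ℝ)-β ≠ 0)] at hc
    exact hc.mono_left nhdsWithin_le_nhds
  -- the head part tends to 0
  have hterm1 : Tendsto (fun ε : ℝ => ε ^ ((1:ℝ)-β) * ∫ a in Ico (0:ℝ) (1-δ), φ a / ((1-a)+a*ε)^2)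
      (𝓝[>] 0) (𝓝 0) := by
    have hub : ∀ ε : ℝ, 0 < ε → ∫ a in Ico (0:ℝ) (1-δ), φ a / ((1-a)+a*ε)^2 ≤ δ⁻¹^2 := by
      intro ε hε
      have hs : Ico (0:ℝ) (1-δ) ⊆ Ico 0 1 := Ico_subset_Ico_right (by linarith)
      have h1 : ∫ a in Ico (0:ℝ) (1-δ), φ a / ((1-a)+a*ε)^2
          ≤ ∫ a in Ico (0:ℝ) (1-δ), δ⁻¹^2 * φ a := by
        apply setIntegral_mono_on ((hintf ε hε).mono_set hs)
          ((hφint.mono_set hs).const_mul _) measurableSet_Ico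
        intro a ha
        have ha0 : (0:ℝ) ≤ a := ha.1
        have ha1 : a < 1 - δ := ha.2
        have hφa : 0 ≤ φ a := hnonneg a (hs ha)
        have hd : δ ≤ (1-a) + a*ε := by nlinarith
        rw [div_le_iff₀ (by nlinarith)]
        calc φ a = φ a * 1 := (mul_one _).symm
        _ ≤ δ⁻¹^2 * φ a * ((1-a)+a*ε)^2 := by
            rw [show δ⁻¹^2 * φ a * ((1-a)+a*ε)^2 = φ a * (((1-a)+a*ε)^2/δ^2) by
              rw [inv_pow]; field_simp]
            apply mul_le_mul_of_nonneg_left _ hφa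
            rw [le_div_iff₀ (by positivity)]
            nlinarith
      have h2 : ∫ a in Ico (0:ℝ) (1-δ), δ⁻¹^2 * φ a ≤ ∫ a in Ico (0:ℝ) 1, δ⁻¹^2 * φ a := by
        apply setIntegral_mono_set (hφint.const_mul _)
        · filter_upwards [ae_restrict_mem measurableSet_Ico] with a ha
          exact mul_nonneg (by positivity) (hnonneg a ha)
        · exact hs.eventuallyLE
      have h3 : ∫ a in Ico (0:ℝ) 1, δ⁻¹^2 * φ a = δ⁻¹^2 := by
        rw [integral_const_mul, hprob, mul_one]
      linarith
    have hlb : ∀ ε : ℝ, 0 < ε → 0 ≤ ∫ a in Ico (0:ℝ) (1-δ), φ a / ((1-a)+a*ε)^2 := by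
      intro ε hε
      apply setIntegral_nonneg measurableSet_Ico
      intro a ha
      have ha1 : a < 1 := by linarith [ha.2]
      exact div_nonneg (hnonneg a ⟨ha.1, ha1⟩) (by positivity)
    apply tendsto_of_tendsto_of_tendsto_of_le_of_le' tendsto_const_nhds
      (by simpa using hrpow0.mul_const (δ⁻¹^2))
    · filter_upwards [self_mem_nhdsWithin] with ε (hε : 0 < ε)
      exact mul_nonneg (Real.rpow_nonneg hε.le _) (hlb ε hε)
    · filter_upwards [self_mem_nhdsWithin] with ε (hε : 0 < ε)
      exact mul_le_mul_of_nonneg_left (hub ε hε) (Real.rpow_nonneg hε.le _)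
  -- the tail part: substitution + dominated convergence
  set Bint : ℝ := ∫ u in Ioi (0:ℝ), u ^ β / (1 + u) ^ 2 with hBint
  set F : ℝ → ℝ → ℝ := fun ε u => (Ioc (0:ℝ) (δ/ε)).indicator
    (fun u => ε ^ (-β) * (φ (1 - ε*u) / (u + 1 - ε*u)^2)) u with hF
  set L : ℝ → ℝ := (Ioi (0:ℝ)).indicator (fun u => φ1 * (u^β/(1+u)^2)) with hL
  have hLint : ∫ u, L u = φ1 * Bint := by
    rw [hL, integral_indicator measurableSet_Ioi, integral_const_mul]
  have hterm2 : Tendsto (fun ε : ℝ => ε ^ ((1:ℝ)-β) * ∫ a in Ico (1-δ) 1, φ a / ((1-a)+a*ε)^2)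
      (𝓝[>] 0) (𝓝 (φ1 * Bint)) := by
    have heq : ∀ ε : ℝ, 0 < ε →
        ε ^ ((1:ℝ)-β) * ∫ a in Ico (1-δ) 1, φ a / ((1-a)+a*ε)^2 = ∫ u, F ε u := by
      intro ε hε
      have hstep1 : ∫ a in Ico (1-δ) 1, φ a / ((1-a)+a*ε)^2
          = ∫ a in (1-δ)..1, φ a / ((1-a)+a*ε)^2 := by
        rw [intervalIntegral.integral_of_le (by linarith), setIntegral_congr_set Ico_ae_eq_Ioc]
      have hstep2 : (∫ u in (0:ℝ)..(δ/ε), φ (1 - ε*u) / ((1-(1-ε*u))+(1-ε*u)*ε)^2)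
          = ε⁻¹ • ∫ a in (1-δ)..1, φ a / ((1-a)+a*ε)^2 := by
        have h := intervalIntegral.integral_comp_sub_mul
          (a := 0) (b := δ/ε) (fun a => φ a / ((1-a)+a*ε)^2) (ne_of_gt hε) 1
        rw [show ε * (δ/ε) = δ by field_simp, mul_zero, sub_zero] at h
        exact h
      have hstep3 : ∫ a in (1-δ)..1, φ a / ((1-a)+a*ε)^2
          = ε • ∫ u in (0:ℝ)..(δ/ε), φ (1 - ε*u) / ((1-(1-ε*u))+(1-ε*u)*ε)^2 := by
        rw [hstep2, smul_smul, mul_inv_cancel₀ (ne_of_gt hε), one_smul]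
      have hstep4 : (∫ u in (0:ℝ)..(δ/ε), φ (1 - ε*u) / ((1-(1-ε*u))+(1-ε*u)*ε)^2)
          = ∫ u, (Ioc (0:ℝ) (δ/ε)).indicator
            (fun u => φ (1 - ε*u) / ((1-(1-ε*u))+(1-ε*u)*ε)^2) u := by
        rw [intervalIntegral.integral_of_le (by positivity),
          integral_indicator measurableSet_Ioc]
      rw [hstep1, hstep3, hstep4, smul_eq_mul, ← mul_assoc, ← integral_const_mul]
      apply integral_congr_ae
      filter_upwards [] with u
      by_cases hu : u ∈ Ioc (0:ℝ) (δ/ε)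
      · rw [Set.indicator_of_mem hu, hF]
        simp only []
        rw [Set.indicator_of_mem hu]
        have hu0 : 0 < u := hu.1
        have hεu : ε*u ≤ δ := by
          have := hu.2
          rw [le_div_iff₀ hε] at this
          linarith [this]
        have hd : 0 < u + 1 - ε*u := by nlinarith
        have hεβ : (0:ℝ) < ε^β := Real.rpow_pos_of_pos hε β
        have h1β : ε^((1:ℝ)-β) = ε / ε^β := by
          rw [Real.rpow_sub hε, Real.rpow_one]
        have hden : (1-(1-ε*u))+(1-ε*u)*ε = ε*(u+1-ε*u) := by ring
        rw [hden, Real.rpow_neg hε.le, h1β]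
        rw [mul_pow]
        field_simp
      · rw [Set.indicator_of_notMem hu, hF]
        simp only []
        rw [Set.indicator_of_notMem hu, mul_zero]
    -- measurability
    have hmeasF : ∀ ε : ℝ, AEStronglyMeasurable (F ε) volume := by
      intro ε
      apply Measurable.aestronglyMeasurable
      apply Measurable.indicator _ measurableSet_Ioc
      exact measurable_const.mul
        ((hmeas.comp (measurable_const.sub (measurable_const.mul measurable_id))).div
        (((measurable_id.add measurable_const).sub
          (measurable_const.mul measurable_id)).pow_const 2))
    -- domination
    have hbd : ∀ᶠ ε in 𝓝[>] (0:ℝ), ∀ᵐ u : ℝ,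
        ‖F ε u‖ ≤ (Ioi (0:ℝ)).indicator (fun u => 8*φ1 * (u^β/(1+u)^2)) u := by
      filter_upwards [Ioo_mem_nhdsGT (by norm_num : (0:ℝ) < 1/2)] with ε hε
      filter_upwards [] with u
      have hε0 : 0 < ε := hε.1
      have hεh : ε < 1/2 := hε.2
      by_cases hu : u ∈ Ioc (0:ℝ) (δ/ε)
      · have hu0 : 0 < u := hu.1
        have hεu : ε*u ≤ δ := by
          have := hu.2
          rw [le_div_iff₀ hε0] at this
          linarith [this]
        have ha1 : 1 - δ ≤ 1 - ε*u := by linarith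
        have ha2 : 1 - ε*u < 1 := by nlinarith [mul_pos hε0 hu0]
        have ha0 : (0:ℝ) ≤ 1 - ε*u := by linarith
        have hφa : 0 ≤ φ (1 - ε*u) := hnonneg _ ⟨ha0, ha2⟩
        have hφb : φ (1 - ε*u) ≤ 2*φ1*(ε*u)^β := by
          have h := hbound (1 - ε*u) ha1 ha2
          rwa [show (1:ℝ) - (1 - ε*u) = ε*u by ring] at h
        have hd2 : (u+1)/2 ≤ u + 1 - ε*u := by
          nlinarith [mul_le_mul_of_nonneg_right hεh.le hu0.le]
        have hdpos : 0 < u + 1 - ε*u := by nlinarith [hd2]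
        rw [hF]
        simp only []
        rw [Set.indicator_of_mem hu, Set.indicator_of_mem (Set.mem_Ioi.mpr hu0),
          Real.norm_eq_abs, abs_of_nonneg (mul_nonneg (Real.rpow_nonneg hε0.le _)
            (div_nonneg hφa (sq_nonneg _)))]
        have hmulr : (ε*u)^β = ε^β * u^β := Real.mul_rpow hε0.le hu0.le
        have hnum : φ (1 - ε*u) ≤ 2*φ1*(ε^β*u^β) := by rw [← hmulr]; exact hφb
        have hden : (1+u)^2/4 ≤ (u+1-ε*u)^2 := by
          have h9 := mul_le_mul hd2 hd2 (by positivity) (by linarith)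
          nlinarith [h9]
        have h1 : φ (1 - ε*u)/(u+1-ε*u)^2 ≤ (2*φ1*(ε^β*u^β))/((1+u)^2/4) :=
          div_le_div₀ (by positivity) hnum (by positivity) hden
        calc ε^(-β) * (φ (1 - ε*u)/(u+1-ε*u)^2)
            ≤ ε^(-β) * ((2*φ1*(ε^β*u^β))/((1+u)^2/4)) :=
            mul_le_mul_of_nonneg_left h1 (Real.rpow_nonneg hε0.le _)
        _ = 8*φ1*(u^β/(1+u)^2) := by
            rw [Real.rpow_neg hε0.le]
            have hεβ : (0:ℝ) < ε^β := Real.rpow_pos_of_pos hε0 β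
            have hu1 : (0:ℝ) < 1 + u := by linarith
            field_simp
            ring
      · rw [hF]
        simp only []
        rw [Set.indicator_of_notMem hu, norm_zero]
        apply Set.indicator_nonneg
        intro v hv
        have hv0 : (0:ℝ) < v := hv
        positivity
    have hbint : Integrable ((Ioi (0:ℝ)).indicator (fun u => 8*φ1 * (u^β/(1+u)^2))) := by
      rw [integrable_indicator_iff measurableSet_Ioi]
      have : IntegrableOn (fun u : ℝ => u^β/(1+u)^2) (Ioi 0) := base_integrable hβ0 hβ1
      exact this.const_mul _
    have hae : ∀ᵐ u : ℝ, u ≠ 0 := by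
      rw [ae_iff]
      have : {u : ℝ | ¬ u ≠ 0} = {0} := by ext u; simp
      rw [this]
      exact volume_singleton
    have hlim : ∀ᵐ u : ℝ, Tendsto (fun ε => F ε u) (𝓝[>] (0:ℝ)) (𝓝 (L u)) := by
      filter_upwards [hae] with u hu
      rcases lt_or_gt_of_ne hu with hneg | hpos
      · have hL0 : L u = 0 := by
          rw [hL]
          exact Set.indicator_of_notMem (by simp only [Set.mem_Ioi]; linarith) _
        rw [hL0]
        apply Tendsto.congr' _ (tendsto_const_nhds (x := (0:ℝ)))
        filter_upwards [self_mem_nhdsWithin] with ε (hε : 0 < ε)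
        rw [hF]
        simp only []
        rw [Set.indicator_of_notMem (fun h => absurd h.1 (by simp only [not_lt]; linarith))]
      · have hLu : L u = φ1 * (u^β/(1+u)^2) := by
          rw [hL]
          exact Set.indicator_of_mem hpos _
        have hm : Tendsto (fun ε : ℝ => 1 - ε*u) (𝓝[>] (0:ℝ)) (𝓝[<] (1:ℝ)) := by
          rw [tendsto_nhdsWithin_iff]
          constructor
          · have hcont : Continuous (fun ε : ℝ => 1 - ε*u) := by fun_prop
            have h := hcont.tendsto (0:ℝ)
            simp only [zero_mul, sub_zero] at h
            exact h.mono_left nhdsWithin_le_nhds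
          · filter_upwards [self_mem_nhdsWithin] with ε (hε : 0 < ε)
            simp only [Set.mem_Iio]
            nlinarith
        have hratio : Tendsto (fun ε : ℝ => φ (1-ε*u) / (φ1 * (ε*u)^β)) (𝓝[>] (0:ℝ)) (𝓝 1) := by
          have h := hasymp.comp hm
          simp only [Function.comp_def, sub_sub_cancel] at h
          exact h
        have hden : Tendsto (fun ε : ℝ => (u+1-ε*u)^2) (𝓝[>] (0:ℝ)) (𝓝 ((u+1)^2)) := by
          have hcont : Continuous (fun ε : ℝ => (u+1-ε*u)^2) := by fun_prop
          have h := hcont.tendsto (0:ℝ)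
          simp only [zero_mul, sub_zero] at h
          exact h.mono_left nhdsWithin_le_nhds
        have hcomb : Tendsto (fun ε : ℝ =>
            (φ (1-ε*u) / (φ1 * (ε*u)^β)) * (φ1 * u^β) / (u+1-ε*u)^2)
            (𝓝[>] (0:ℝ)) (𝓝 (L u)) := by
          have h := (hratio.mul_const (φ1 * u^β)).div hden (by positivity)
          rw [hLu]
          rw [show φ1 * (u^β/(1+u)^2) = 1 * (φ1 * u^β) / (u+1)^2 by
            rw [one_mul, add_comm u 1]; ring]
          exact h
        apply Tendsto.congr' _ hcomb
        filter_upwards [Ioo_mem_nhdsGT (show (0:ℝ) < δ/u by positivity)] with ε hε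
        have hε0 : 0 < ε := hε.1
        have hεu : ε*u ≤ δ := by
          have := hε.2
          rw [lt_div_iff₀ hpos] at this
          linarith [this]
        have hmem : u ∈ Ioc (0:ℝ) (δ/ε) := ⟨hpos, by rw [le_div_iff₀ hε0]; linarith [mul_comm u ε ▸ hεu]⟩
        rw [hF]
        simp only []
        rw [Set.indicator_of_mem hmem]
        have h1 : (ε*u)^β = ε^β*u^β := Real.mul_rpow hε0.le hpos.le
        have hεβ : (0:ℝ) < ε^β := Real.rpow_pos_of_pos hε0 β
        have huβ : (0:ℝ) < u^β := Real.rpow_pos_of_pos hpos β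
        rw [Real.rpow_neg hε0.le, h1]
        have hnum : (φ (1-ε*u)/(φ1*(ε^β*u^β)))*(φ1*u^β) = (ε^β)⁻¹ * φ (1-ε*u) := by
          field_simp
        rw [show (ε^β)⁻¹ * (φ (1-ε*u)/(u+1-ε*u)^2) = ((ε^β)⁻¹ * φ (1-ε*u))/(u+1-ε*u)^2 from
          (mul_div_assoc _ _ _).symm, ← hnum, mul_div_assoc]
    have hdct := tendsto_integral_filter_of_dominated_convergence _
      (Eventually.of_forall hmeasF) hbd hbint hlim
    rw [hLint] at hdct
    apply Tendsto.congr' _ hdct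
    filter_upwards [self_mem_nhdsWithin] with ε (hε : 0 < ε)
    exact (heq ε hε).symm
  have hsum := hterm1.add hterm2
  rw [zero_add] at hsum
  apply Tendsto.congr' _ hsum
  filter_upwards [self_mem_nhdsWithin] with ε (hε : 0 < ε)
  exact (hsplitev ε hε).symm

lemma sin_half_sq_bounds {t : ℝ} (ht : |t| ≤ 1) :
    t^2/4 - t^4/32 ≤ Real.sin (t/2) ^ 2 ∧ Real.sin (t/2)^2 ≤ t^2/4 := by
  have heven : Real.sin (t/2)^2 = Real.sin (|t|/2)^2 := by
    rcases abs_cases t with ⟨h, _⟩ | ⟨h, _⟩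
    · rw [h]
    · rw [h, neg_div, Real.sin_neg]; ring
  rw [heven]
  have hz0 : 0 ≤ |t|/2 := by positivity
  have hz1 : |t|/2 ≤ 1/2 := by linarith [ht]
  have hzsq : (|t|/2)^2 = t^2/4 := by rw [div_pow, sq_abs]; norm_num
  have hsinnn : 0 ≤ Real.sin (|t|/2) :=
    Real.sin_nonneg_of_nonneg_of_le_pi hz0 (by linarith [Real.pi_gt_three])
  have hsinle : Real.sin (|t|/2) ≤ |t|/2 := by
    rcases eq_or_lt_of_le hz0 with h | h
    · rw [← h]; simp
    · exact (Real.sin_lt h).le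
  constructor
  · rcases eq_or_lt_of_le hz0 with h | h
    · have h0 : |t| = 0 := by linarith [h.symm]
      have ht0 : t = 0 := abs_eq_zero.1 h0
      rw [ht0]; norm_num
    · have hgt : |t|/2 - (|t|/2)^3/4 < Real.sin (|t|/2) := by
        have := Real.sin_gt_sub_cube h; linarith [pow_nonneg hz0 3]
      have hw0 : 0 ≤ |t|/2 - (|t|/2)^3/4 := by nlinarith
      have hsq : (|t|/2 - (|t|/2)^3/4)^2 ≤ Real.sin (|t|/2)^2 := by
        nlinarith [hgt, hw0, hsinnn]
      have ht2 : t^2 = 4*(|t|/2)^2 := by rw [hzsq]; ring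
      nlinarith [hsq, ht2, sq_nonneg ((|t|/2)^3), sq_nonneg (|t|/2)]
  · nlinarith [hsinle, hsinnn, hzsq]

set_option maxHeartbeats 1000000 in
/-- Isotropic power-law singularity of the aggregated 4N autoregressive random
field spectral density: with `f₄(x,y) = ∫₀¹ φ(a)/(1 - (a/2)(cos x + cos y))² da`
and `φ(a) ~ φ₁ (1-a)^β` as `a → 1⁻`, `0 < β < 1`, there exists `C > 0` such that
`(x²+y²)^{1-β} f₄(x,y) → C` as `(x,y) → (0,0)`, `(x,y) ≠ (0,0)`. -/
theorem aggregated_4N_field_spectral_density_asymptotics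
    (φ : ℝ → ℝ) (φ1 β : ℝ) (hφ1 : 0 < φ1) (hβ0 : 0 < β) (hβ1 : β < 1)
    (hmeas : Measurable φ)
    (hnonneg : ∀ a ∈ Set.Ico (0:ℝ) 1, 0 ≤ φ a)
    (hprob : ∫ a in Set.Ico (0:ℝ) 1, φ a = 1)
    (hasymp : Tendsto (fun a => φ a / (φ1 * (1 - a) ^ β)) (𝓝[<] (1:ℝ)) (𝓝 1)) :
    ∃ C : ℝ, 0 < C ∧
      Tendsto (fun p : ℝ × ℝ =>
          (p.1 ^ 2 + p.2 ^ 2) ^ ((1:ℝ) - β) *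
            ∫ a in Set.Ico (0:ℝ) 1, φ a / (1 - a / 2 * (Real.cos p.1 + Real.cos p.2)) ^ 2)
        (𝓝[≠] ((0, 0) : ℝ × ℝ)) (𝓝 C) := by
  have hB := B_pos hβ0 hβ1
  refine ⟨(4:ℝ)^((1:ℝ)-β) * (φ1 * ∫ u in Set.Ioi (0:ℝ), u^β/(1+u)^2),
    mul_pos (Real.rpow_pos_of_pos (by norm_num) _) (mul_pos hφ1 hB), ?_⟩
  have hkey := key_limit hφ1 hβ0 hβ1 hmeas hnonneg hprob hasymp
  have heq : ∀ p : ℝ × ℝ, 1 - (Real.cos p.1 + Real.cos p.2)/2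
      = Real.sin (p.1/2)^2 + Real.sin (p.2/2)^2 := by
    intro p
    have h1 := Real.sin_sq_eq_half_sub (p.1/2)
    have h2 := Real.sin_sq_eq_half_sub (p.2/2)
    rw [show 2*(p.1/2) = p.1 by ring] at h1
    rw [show 2*(p.2/2) = p.2 by ring] at h2
    rw [h1, h2]; ring
  -- eventual facts near (0,0)
  have hev : ∀ᶠ p : ℝ × ℝ in 𝓝[≠] ((0,0) : ℝ×ℝ),
      0 < p.1^2 + p.2^2 ∧ p.1^2 + p.2^2 < 2 ∧
      (p.1^2+p.2^2)/4 - (p.1^2+p.2^2)^2/32 ≤ 1 - (Real.cos p.1 + Real.cos p.2)/2 ∧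
      1 - (Real.cos p.1 + Real.cos p.2)/2 ≤ (p.1^2+p.2^2)/4 ∧
      0 < 1 - (Real.cos p.1 + Real.cos p.2)/2 := by
    have hU : {p : ℝ×ℝ | p.1^2 < 1 ∧ p.2^2 < 1} ∈ 𝓝 ((0,0):ℝ×ℝ) := by
      apply IsOpen.mem_nhds
      · have hrw : {p : ℝ×ℝ | p.1^2 < 1 ∧ p.2^2 < 1}
            = {p : ℝ×ℝ | p.1^2 < 1} ∩ {p : ℝ×ℝ | p.2^2 < 1} := rfl
        rw [hrw]
        exact IsOpen.inter (isOpen_lt (continuous_fst.pow 2) continuous_const)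
          (isOpen_lt (continuous_snd.pow 2) continuous_const)
      · constructor <;> norm_num
    filter_upwards [nhdsWithin_le_nhds hU, eventually_mem_nhdsWithin] with p hp hne
    have hx1 : |p.1| ≤ 1 := by nlinarith [sq_abs p.1, abs_nonneg p.1, hp.1]
    have hx2 : |p.2| ≤ 1 := by nlinarith [sq_abs p.2, abs_nonneg p.2, hp.2]
    have hb1 := sin_half_sq_bounds hx1
    have hb2 := sin_half_sq_bounds hx2
    have hs0 : 0 < p.1^2 + p.2^2 := by
      rcases lt_or_eq_of_le (by positivity : (0:ℝ) ≤ p.1^2+p.2^2) with h | h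
      · exact h
      · exfalso
        apply hne
        have h1 : p.1 = 0 := by nlinarith [sq_nonneg p.1, sq_nonneg p.2]
        have h2 : p.2 = 0 := by nlinarith [sq_nonneg p.1, sq_nonneg p.2]
        simp only [Set.mem_singleton_iff]
        exact Prod.ext h1 h2
    have hs2 : p.1^2 + p.2^2 < 2 := by linarith [hp.1, hp.2]
    have hlow : (p.1^2+p.2^2)/4 - (p.1^2+p.2^2)^2/32
        ≤ 1 - (Real.cos p.1 + Real.cos p.2)/2 := by
      rw [heq p]
      nlinarith [hb1.1, hb2.1, sq_nonneg (p.1^2 - p.2^2), sq_nonneg (p.1*p.2)]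
    have hup : 1 - (Real.cos p.1 + Real.cos p.2)/2 ≤ (p.1^2+p.2^2)/4 := by
      rw [heq p]
      linarith [hb1.2, hb2.2]
    have hepos : 0 < 1 - (Real.cos p.1 + Real.cos p.2)/2 := by
      nlinarith [hlow, hs0, hs2]
    exact ⟨hs0, hs2, hlow, hup, hepos⟩
  -- the ratio e/s tends to 1/4
  have hq : Tendsto (fun p : ℝ×ℝ =>
      (1 - (Real.cos p.1 + Real.cos p.2)/2) / (p.1^2 + p.2^2))
      (𝓝[≠] ((0,0):ℝ×ℝ)) (𝓝 (1/4)) := by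
    have hlowt : Tendsto (fun p : ℝ×ℝ => 1/4 - (p.1^2+p.2^2)/32)
        (𝓝[≠] ((0,0):ℝ×ℝ)) (𝓝 (1/4)) := by
      have hcont : Continuous (fun p : ℝ×ℝ => 1/4 - (p.1^2+p.2^2)/32) := by fun_prop
      have h := hcont.tendsto ((0,0):ℝ×ℝ)
      norm_num at h
      exact h.mono_left nhdsWithin_le_nhds
    apply tendsto_of_tendsto_of_tendsto_of_le_of_le' hlowt tendsto_const_nhds
    · filter_upwards [hev] with p hp
      obtain ⟨hs0, hs2, hlow, hup, hepos⟩ := hp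
      rw [le_div_iff₀ hs0]
      nlinarith [hlow, hs0]
    · filter_upwards [hev] with p hp
      obtain ⟨hs0, hs2, hlow, hup, hepos⟩ := hp
      rw [div_le_iff₀ hs0]
      nlinarith [hup]
  -- e tends to 0 from the right
  have h1 : Tendsto (fun p : ℝ×ℝ => 1 - (Real.cos p.1 + Real.cos p.2)/2)
      (𝓝[≠] ((0,0):ℝ×ℝ)) (𝓝[>] (0:ℝ)) := by
    rw [tendsto_nhdsWithin_iff]
    constructor
    · have hcont : Continuous (fun p : ℝ×ℝ => 1 - (Real.cos p.1 + Real.cos p.2)/2) := by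
        fun_prop
      have h := hcont.tendsto ((0,0):ℝ×ℝ)
      simp only [Real.cos_zero] at h
      norm_num at h
      exact h.mono_left nhdsWithin_le_nhds
    · filter_upwards [hev] with p hp
      exact hp.2.2.2.2
  -- compose with the key limit
  have h2 := hkey.comp h1
  simp only [Function.comp_def] at h2
  have h2' : Tendsto (fun p : ℝ×ℝ =>
      (1 - (Real.cos p.1 + Real.cos p.2)/2) ^ ((1:ℝ)-β) *
        ∫ a in Set.Ico (0:ℝ) 1, φ a / (1 - a/2*(Real.cos p.1 + Real.cos p.2))^2)
      (𝓝[≠] ((0,0):ℝ×ℝ)) (𝓝 (φ1 * ∫ u in Set.Ioi (0:ℝ), u^β/(1+u)^2)) := by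
    apply Tendsto.congr _ h2
    intro p
    congr 1
    refine integral_congr_ae (Eventually.of_forall fun a => ?_)
    show φ a / ((1-a)+a*(1 - (Real.cos p.1+Real.cos p.2)/2))^2
      = φ a / (1 - a/2*(Real.cos p.1+Real.cos p.2))^2
    rw [show (1-a)+a*(1 - (Real.cos p.1+Real.cos p.2)/2)
      = 1 - a/2*(Real.cos p.1+Real.cos p.2) from by ring]
  have hq' : Tendsto (fun p : ℝ×ℝ =>
      ((1 - (Real.cos p.1 + Real.cos p.2)/2) / (p.1^2 + p.2^2)) ^ (β-(1:ℝ)))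
      (𝓝[≠] ((0,0):ℝ×ℝ)) (𝓝 (((1:ℝ)/4) ^ (β-(1:ℝ)))) := by
    have hc := (Real.continuousAt_rpow_const (1/4) (β-1) (Or.inl (by norm_num))).tendsto
    have := hc.comp hq
    simpa [Function.comp_def] using this
  have hfinal := hq'.mul h2'
  have hval : ((1:ℝ)/4) ^ (β-(1:ℝ)) = (4:ℝ)^((1:ℝ)-β) := by
    have h14 : ((1:ℝ)/4) = (4:ℝ)^(-(1:ℝ)) := by
      rw [Real.rpow_neg_one]; norm_num
    rw [h14, ← Real.rpow_mul (by norm_num : (0:ℝ) ≤ 4),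
      show (-(1:ℝ))*(β-1) = 1-β by ring]
  rw [hval] at hfinal
  apply Tendsto.congr' _ hfinal
  filter_upwards [hev] with p hp
  obtain ⟨hs0, hs2, hlow, hup, hepos⟩ := hp
  have hkeyeq : ((1 - (Real.cos p.1 + Real.cos p.2)/2) / (p.1^2 + p.2^2)) ^ (β-(1:ℝ))
      * (1 - (Real.cos p.1 + Real.cos p.2)/2) ^ ((1:ℝ)-β)
      = (p.1^2 + p.2^2) ^ ((1:ℝ)-β) := by
    rw [Real.div_rpow hepos.le hs0.le, div_mul_eq_mul_div, ← Real.rpow_add hepos,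
      show β-1+(1-β) = 0 by ring, Real.rpow_zero, one_div,
      ← Real.rpow_neg hs0.le, neg_sub]
  rw [← hkeyeq]
  ring
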